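/- Every convex polyomino on the square lattice with area A and perimeter P contains an axis-aligned lattice square with side length at least 2A/P. -/

import Mathlib

/-- Two unit lattice cells (indexed by their lower-left corners) share an edge. -/
def CellAdj (a b : ℤ × ℤ) : Prop :=
  (a.1 = b.1 ∧ (a.2 - b.2).natAbs = 1) ∨ (a.2 = b.2 ∧ (a.1 - b.1).natAbs = 1)

instance : ∀ a b : ℤ × ℤ, Decidable (CellAdj a b) := fun a b => by
  unfold CellAdj; infer_instance

/-- A polyomino: a nonempty finite edge-connected set of unit lattice cells. -/
def IsPolyomino (S : Finset (ℤ × ℤ)) : Prop :=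
  S.Nonempty ∧ ∀ a ∈ S, ∀ b ∈ S,
    Relation.ReflTransGen (fun x y => x ∈ S ∧ y ∈ S ∧ CellAdj x y) a b

/-- Row-convexity: the cells in every row form a contiguous segment. -/
def RowConvex (S : Finset (ℤ × ℤ)) : Prop :=
  ∀ x₁ x₂ x₃ y : ℤ, x₁ ≤ x₂ → x₂ ≤ x₃ → (x₁, y) ∈ S → (x₃, y) ∈ S → (x₂, y) ∈ S

/-- Column-convexity: the cells in every column form a contiguous segment. -/
def ColConvex (S : Finset (ℤ × ℤ)) : Prop :=
  ∀ x y₁ y₂ y₃ : ℤ, y₁ ≤ y₂ → y₂ ≤ y₃ → (x, y₁) ∈ S → (x, y₃) ∈ S → (x, y₂) ∈ S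

/-- The perimeter (boundary length) of a set of cells: each cell contributes its
four sides, minus the shared (interior) sides, each of which is counted twice
among ordered adjacent pairs. -/
def polyPerimeter (S : Finset (ℤ × ℤ)) : ℕ :=
  4 * S.card - ((S ×ˢ S).filter (fun p => CellAdj p.1 p.2)).card


namespace ConvPoly

/-- Abstract row-interval description of a convex polyomino. -/
structure Cfg where
  y0 : ℤ
  y1 : ℤ
  l : ℤ → ℤ
  r : ℤ → ℤ

/-- Validity: nonempty rows, consecutive rows intersect, column convexity. -/
def Ok (c : Cfg) : Prop :=
  c.y0 ≤ c.y1 ∧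
  (∀ y, c.y0 ≤ y → y ≤ c.y1 → c.l y ≤ c.r y) ∧
  (∀ y, c.y0 ≤ y → y + 1 ≤ c.y1 → c.l (y+1) ≤ c.r y ∧ c.l y ≤ c.r (y+1)) ∧
  (∀ x a b d, c.y0 ≤ a → a ≤ b → b ≤ d → d ≤ c.y1 →
    c.l a ≤ x → x ≤ c.r a → c.l d ≤ x → x ≤ c.r d → c.l b ≤ x ∧ x ≤ c.r b)

noncomputable def area (c : Cfg) : ℤ := ∑ y ∈ Finset.Icc c.y0 c.y1, (c.r y - c.l y + 1)

noncomputable def minL (c : Cfg) : ℤ := (((Finset.Icc c.y0 c.y1).image c.l).min).untopD 0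
noncomputable def maxR (c : Cfg) : ℤ := (((Finset.Icc c.y0 c.y1).image c.r).max).unbotD 0

lemma image_ne (c : Cfg) (h : c.y0 ≤ c.y1) (f : ℤ → ℤ) :
    ((Finset.Icc c.y0 c.y1).image f).Nonempty :=
  Finset.Nonempty.image (Finset.nonempty_Icc.2 h) f

lemma minL_le (c : Cfg) (h : c.y0 ≤ c.y1) {y : ℤ} (h1 : c.y0 ≤ y) (h2 : y ≤ c.y1) :
    minL c ≤ c.l y := by
  have hne := image_ne c h c.l
  have : minL c = ((Finset.Icc c.y0 c.y1).image c.l).min' hne := by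
    rw [minL, ← Finset.coe_min' hne]; rfl
  rw [this]
  exact Finset.min'_le _ _ (Finset.mem_image_of_mem c.l (Finset.mem_Icc.2 ⟨h1, h2⟩))

lemma le_maxR (c : Cfg) (h : c.y0 ≤ c.y1) {y : ℤ} (h1 : c.y0 ≤ y) (h2 : y ≤ c.y1) :
    c.r y ≤ maxR c := by
  have hne := image_ne c h c.r
  have : maxR c = ((Finset.Icc c.y0 c.y1).image c.r).max' hne := by
    rw [maxR, ← Finset.coe_max' hne]; rfl
  rw [this]
  exact Finset.le_max' _ _ (Finset.mem_image_of_mem c.r (Finset.mem_Icc.2 ⟨h1, h2⟩))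

lemma minL_attained (c : Cfg) (h : c.y0 ≤ c.y1) :
    ∃ y, c.y0 ≤ y ∧ y ≤ c.y1 ∧ c.l y = minL c := by
  have hne := image_ne c h c.l
  have : minL c = ((Finset.Icc c.y0 c.y1).image c.l).min' hne := by
    rw [minL, ← Finset.coe_min' hne]; rfl
  have hm := Finset.min'_mem _ hne
  rw [← this] at hm
  obtain ⟨y, hy, hly⟩ := Finset.mem_image.1 hm
  rw [Finset.mem_Icc] at hy
  exact ⟨y, hy.1, hy.2, hly⟩

lemma maxR_attained (c : Cfg) (h : c.y0 ≤ c.y1) :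
    ∃ y, c.y0 ≤ y ∧ y ≤ c.y1 ∧ c.r y = maxR c := by
  have hne := image_ne c h c.r
  have : maxR c = ((Finset.Icc c.y0 c.y1).image c.r).max' hne := by
    rw [maxR, ← Finset.coe_max' hne]; rfl
  have hm := Finset.max'_mem _ hne
  rw [← this] at hm
  obtain ⟨y, hy, hly⟩ := Finset.mem_image.1 hm
  rw [Finset.mem_Icc] at hy
  exact ⟨y, hy.1, hy.2, hly⟩

/-- The valley lemma for left endpoints. -/
lemma valley (c : Cfg) (hc : Ok c) {a b d : ℤ} (hy0 : c.y0 ≤ a) (hab : a ≤ b)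
    (hbd : b ≤ d) (hy1 : d ≤ c.y1) : c.l b ≤ max (c.l a) (c.l d) := by
  obtain ⟨hy, hlr, hcons, hcol⟩ := hc
  by_contra hcon
  push_neg at hcon
  rw [max_lt_iff] at hcon
  obtain ⟨ha, hd⟩ := hcon
  -- b' : greatest y in [a,b] with l y < l b
  set F : Finset ℤ := (Finset.Icc a b).filter (fun y => c.l y < c.l b) with hF
  have hFne : F.Nonempty := ⟨a, by simp [hF, Finset.mem_Icc, hab, ha]⟩
  set b' := F.max' hFne with hb'
  have hb'F : b' ∈ F := Finset.max'_mem _ _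
  rw [hF, Finset.mem_filter, Finset.mem_Icc] at hb'F
  obtain ⟨⟨hab', hb'b⟩, hlb'⟩ := hb'F
  have hb'ne : b' ≠ b := fun h => by rw [h] at hlb'; omega
  have hb'lt : b' < b := lt_of_le_of_ne hb'b hb'ne
  have hnext : ¬ (c.l (b'+1) < c.l b) := by
    intro hcontra
    have : b' + 1 ∈ F := by
      rw [hF, Finset.mem_filter, Finset.mem_Icc]; exact ⟨⟨by omega, by omega⟩, hcontra⟩
    have := Finset.le_max' F _ this
    omega
  push_neg at hnext
  -- row b' contains l b - 1
  have hr1 : c.l (b'+1) ≤ c.r b' := (hcons b' (by omega) (by omega)).1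
  have hrow1a : c.l b' ≤ c.l b - 1 := by omega
  have hrow1b : c.l b - 1 ≤ c.r b' := by omega
  -- b'' : least y in [b,d] with l y < l b
  set G : Finset ℤ := (Finset.Icc b d).filter (fun y => c.l y < c.l b) with hG
  have hGne : G.Nonempty := ⟨d, by simp [hG, Finset.mem_Icc, hbd, hd]⟩
  set b'' := G.min' hGne with hb''
  have hb''G : b'' ∈ G := Finset.min'_mem _ _
  rw [hG, Finset.mem_filter, Finset.mem_Icc] at hb''G
  obtain ⟨⟨hbb'', hb''d⟩, hlb''⟩ := hb''G
  have hb''ne : b'' ≠ b := fun h => by rw [h] at hlb''; omega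
  have hb''gt : b < b'' := lt_of_le_of_ne hbb'' (Ne.symm hb''ne)
  have hprev : ¬ (c.l (b''-1) < c.l b) := by
    intro hcontra
    have : b'' - 1 ∈ G := by
      rw [hG, Finset.mem_filter, Finset.mem_Icc]; exact ⟨⟨by omega, by omega⟩, hcontra⟩
    have := Finset.min'_le G _ this
    omega
  push_neg at hprev
  have hr2 : c.l (b''-1) ≤ c.r b'' := by
    have := (hcons (b''-1) (by omega) (by omega)).2
    simpa using this
  have hrow2a : c.l b'' ≤ c.l b - 1 := by omega
  have hrow2b : c.l b - 1 ≤ c.r b'' := by omega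
  -- column convexity gives (l b - 1) in row b
  have := hcol (c.l b - 1) b' b b'' (by omega) (by omega) (by omega) (by omega)
    hrow1a hrow1b hrow2a hrow2b
  omega

/-- Mirror in x. -/
def mux (c : Cfg) : Cfg := ⟨c.y0, c.y1, fun y => -c.r y, fun y => -c.l y⟩

lemma ok_mux (c : Cfg) (hc : Ok c) : Ok (mux c) := by
  obtain ⟨hy, hlr, hcons, hcol⟩ := hc
  refine ⟨hy, fun y h1 h2 => by simp [mux]; exact hlr y h1 h2, fun y h1 h2 => ?_, ?_⟩
  · have := hcons y h1 h2
    constructor <;> simp [mux] <;> omega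
  · intro x a b d h1 h2 h3 h4 g1 g2 g3 g4
    simp only [mux] at *
    have := hcol (-x) a b d h1 h2 h3 h4 (by omega) (by omega) (by omega) (by omega)
    omega

lemma area_mux (c : Cfg) : area (mux c) = area c := by
  unfold area mux
  apply Finset.sum_congr rfl
  intro y _
  simp; ring

/-- Mountain lemma for right endpoints. -/
lemma mountain (c : Cfg) (hc : Ok c) {a b d : ℤ} (hy0 : c.y0 ≤ a) (hab : a ≤ b)
    (hbd : b ≤ d) (hy1 : d ≤ c.y1) : min (c.r a) (c.r d) ≤ c.r b := by
  have := valley (mux c) (ok_mux c hc) hy0 hab hbd hy1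
  simp only [mux] at this
  have h2 : max (-c.r a) (-c.r d) = -(min (c.r a) (c.r d)) := by
    rcases le_total (c.r a) (c.r d) with h | h <;> simp [max_def, min_def] <;> omega
  omega


lemma le_minL (c : Cfg) (h : c.y0 ≤ c.y1) {z : ℤ}
    (hz : ∀ y, c.y0 ≤ y → y ≤ c.y1 → z ≤ c.l y) : z ≤ minL c := by
  obtain ⟨y, h1, h2, h3⟩ := minL_attained c h
  rw [← h3]; exact hz y h1 h2

lemma maxR_le (c : Cfg) (h : c.y0 ≤ c.y1) {z : ℤ}
    (hz : ∀ y, c.y0 ≤ y → y ≤ c.y1 → c.r y ≤ z) : maxR c ≤ z := by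
  obtain ⟨y, h1, h2, h3⟩ := maxR_attained c h
  rw [← h3]; exact hz y h1 h2

lemma minL_le_maxR (c : Cfg) (hc : Ok c) : minL c ≤ maxR c := by
  obtain ⟨y, h1, h2, h3⟩ := minL_attained c hc.1
  calc minL c = c.l y := h3.symm
    _ ≤ c.r y := hc.2.1 y h1 h2
    _ ≤ maxR c := le_maxR c hc.1 h1 h2

lemma area_pos (c : Cfg) (hc : Ok c) : c.y1 - c.y0 + 1 ≤ area c := by
  have : area c = ∑ y ∈ Finset.Icc c.y0 c.y1, (c.r y - c.l y + 1) := rfl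
  rw [this]
  calc c.y1 - c.y0 + 1 = ∑ y ∈ Finset.Icc c.y0 c.y1, (1:ℤ) := by
        rw [Finset.sum_const, Int.card_Icc]
        have := hc.1
        simp [smul_eq_mul]
        omega
    _ ≤ _ := Finset.sum_le_sum (fun y hy => by
        rw [Finset.mem_Icc] at hy
        have := hc.2.1 y hy.1 hy.2; omega)

/-- The set of rows where the leftmost column is occupied. -/
noncomputable def colL (c : Cfg) : Finset ℤ := (Finset.Icc c.y0 c.y1).filter (fun y => c.l y = minL c)

noncomputable def colR (c : Cfg) : Finset ℤ := (Finset.Icc c.y0 c.y1).filter (fun y => c.r y = maxR c)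

lemma colL_nonempty (c : Cfg) (hc : Ok c) : (colL c).Nonempty := by
  obtain ⟨y, h1, h2, h3⟩ := minL_attained c hc.1
  exact ⟨y, by simp [colL, Finset.mem_Icc, h1, h2, h3]⟩

/-- colL is an interval. -/
lemma colL_eq_Icc (c : Cfg) (hc : Ok c) :
    colL c = Finset.Icc ((colL c).min' (colL_nonempty c hc)) ((colL c).max' (colL_nonempty c hc)) := by
  set u := (colL c).min' (colL_nonempty c hc) with hu
  set v := (colL c).max' (colL_nonempty c hc) with hv
  have huF : u ∈ colL c := Finset.min'_mem _ _
  have hvF : v ∈ colL c := Finset.max'_mem _ _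
  rw [colL, Finset.mem_filter, Finset.mem_Icc] at huF hvF
  apply Finset.Subset.antisymm
  · intro y hy
    rw [Finset.mem_Icc]
    exact ⟨Finset.min'_le _ _ hy, Finset.le_max' _ _ hy⟩
  · intro y hy
    rw [Finset.mem_Icc] at hy
    rw [colL, Finset.mem_filter, Finset.mem_Icc]
    have hcol := hc.2.2.2 (minL c) u y v huF.1.1 hy.1 hy.2 hvF.1.2
      (le_of_eq huF.2) (by rw [← huF.2]; exact hc.2.1 u huF.1.1 (le_trans hy.1 (le_trans hy.2 hvF.1.2)))
      (le_of_eq hvF.2) (by rw [← hvF.2]; exact hc.2.1 v (le_trans huF.1.1 (le_trans hy.1 hy.2)) hvF.1.2)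
    refine ⟨⟨le_trans huF.1.1 hy.1, le_trans hy.2 hvF.1.2⟩, ?_⟩
    have := minL_le c hc.1 (le_trans huF.1.1 hy.1) (le_trans hy.2 hvF.1.2)
    omega

/-- Square existence: if the bottom row, top row have length ≥ k and the left
column has height ≥ k, then there is a k×k square. -/
lemma sq (c : Cfg) (hc : Ok c) (k : ℤ) (hk1 : 1 ≤ k)
    (hkb : k ≤ c.r c.y0 - c.l c.y0 + 1) (hkt : k ≤ c.r c.y1 - c.l c.y1 + 1)
    (hkl : k ≤ ((colL c).card : ℤ)) :
    ∃ b, c.y0 ≤ b ∧ b + k - 1 ≤ c.y1 ∧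
      ∀ y, b ≤ y → y ≤ b + k - 1 → c.l y ≤ minL c ∧ minL c + k - 1 ≤ c.r y := by
  have hIcc := colL_eq_Icc c hc
  set u := (colL c).min' (colL_nonempty c hc) with hu
  set v := (colL c).max' (colL_nonempty c hc) with hv
  have hcard : ((colL c).card : ℤ) = v - u + 1 := by
    rw [hIcc, Int.card_Icc]
    have : u ≤ v := Finset.min'_le _ _ (Finset.max'_mem _ _)
    omega
  have huF : u ∈ colL c := Finset.min'_mem _ _
  have hvF : v ∈ colL c := Finset.max'_mem _ _
  rw [colL, Finset.mem_filter, Finset.mem_Icc] at huF hvF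
  refine ⟨u, huF.1.1, by omega, fun y hy1 hy2 => ?_⟩
  have hyv : y ≤ v := by omega
  have hymem : y ∈ colL c := by
    rw [hIcc, Finset.mem_Icc]; exact ⟨hy1, hyv⟩
  rw [colL, Finset.mem_filter] at hymem
  constructor
  · omega
  · -- every row has r ≥ minL + k - 1
    have h1 : minL c + k - 1 ≤ c.r c.y0 := by
      have := minL_le c hc.1 (le_refl c.y0) hc.1
      omega
    have h2 : minL c + k - 1 ≤ c.r c.y1 := by
      have := minL_le c hc.1 hc.1 (le_refl c.y1)
      omega
    have hm := mountain c hc (le_refl c.y0) (show c.y0 ≤ y by omega)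
      (show y ≤ c.y1 by omega) (le_refl c.y1)
    omega


/-- Peel the bottom row. -/
lemma peelBottom (c : Cfg) (hc : Ok c) (hh : c.y0 < c.y1) :
    Ok ⟨c.y0 + 1, c.y1, c.l, c.r⟩ ∧
    area ⟨c.y0 + 1, c.y1, c.l, c.r⟩ = area c - (c.r c.y0 - c.l c.y0 + 1) ∧
    minL c ≤ minL ⟨c.y0 + 1, c.y1, c.l, c.r⟩ ∧
    maxR ⟨c.y0 + 1, c.y1, c.l, c.r⟩ ≤ maxR c := by
  obtain ⟨hy, hlr, hcons, hcol⟩ := hc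
  set c' : Cfg := ⟨c.y0 + 1, c.y1, c.l, c.r⟩ with hc'
  have hok : Ok c' := by
    refine ⟨by simp [hc']; omega, fun y h1 h2 => hlr y (by simp [hc'] at h1 h2 ⊢; omega) h2,
      fun y h1 h2 => hcons y (by simp [hc'] at h1 h2 ⊢; omega) h2,
      fun x a b d h1 h2 h3 h4 => hcol x a b d (by simp [hc'] at h1 h2 h3 h4 ⊢; omega) h2 h3 h4⟩
  refine ⟨hok, ?_, ?_, ?_⟩
  · have hsplit : Finset.Icc c.y0 c.y1 = insert c.y0 (Finset.Icc (c.y0+1) c.y1) := by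
      ext z; simp [Finset.mem_Icc]; omega
    have : area c = (c.r c.y0 - c.l c.y0 + 1) + area c' := by
      rw [area, hsplit, Finset.sum_insert (by simp [Finset.mem_Icc])]
      rfl
    omega
  · exact le_minL c' hok.1 (fun y h1 h2 => minL_le c hy (by simp [hc'] at h1; omega) h2)
  · exact maxR_le c' hok.1 (fun y h1 h2 => le_maxR c hy (by simp [hc'] at h1; omega) h2)

/-- Peel the top row. -/
lemma peelTop (c : Cfg) (hc : Ok c) (hh : c.y0 < c.y1) :
    Ok ⟨c.y0, c.y1 - 1, c.l, c.r⟩ ∧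
    area ⟨c.y0, c.y1 - 1, c.l, c.r⟩ = area c - (c.r c.y1 - c.l c.y1 + 1) ∧
    minL c ≤ minL ⟨c.y0, c.y1 - 1, c.l, c.r⟩ ∧
    maxR ⟨c.y0, c.y1 - 1, c.l, c.r⟩ ≤ maxR c := by
  obtain ⟨hy, hlr, hcons, hcol⟩ := hc
  set c' : Cfg := ⟨c.y0, c.y1 - 1, c.l, c.r⟩ with hc'
  have hok : Ok c' := by
    refine ⟨by simp [hc']; omega, fun y h1 h2 => hlr y h1 (by simp [hc'] at h1 h2 ⊢; omega),
      fun y h1 h2 => hcons y h1 (by simp [hc'] at h1 h2 ⊢; omega),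
      fun x a b d h1 h2 h3 h4 => hcol x a b d h1 h2 h3 (by simp [hc'] at h1 h2 h3 h4 ⊢; omega)⟩
  refine ⟨hok, ?_, ?_, ?_⟩
  · have hsplit : Finset.Icc c.y0 c.y1 = insert c.y1 (Finset.Icc c.y0 (c.y1-1)) := by
      ext z; simp [Finset.mem_Icc]; omega
    have : area c = (c.r c.y1 - c.l c.y1 + 1) + area c' := by
      rw [area, hsplit, Finset.sum_insert (by simp [Finset.mem_Icc])]
      rfl
    omega
  · exact le_minL c' hok.1 (fun y h1 h2 => minL_le c hy h1 (by simp [hc'] at h2; omega))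
  · exact maxR_le c' hok.1 (fun y h1 h2 => le_maxR c hy h1 (by simp [hc'] at h2; omega))


/-- Peel the leftmost column. -/
lemma peelLeft (c : Cfg) (hc : Ok c) (hw : minL c + 1 ≤ maxR c) :
    ∃ c' : Cfg, Ok c' ∧
      area c' = area c - ((colL c).card : ℤ) ∧
      c.y0 ≤ c'.y0 ∧ c'.y1 ≤ c.y1 ∧
      minL c + 1 ≤ minL c' ∧ maxR c' ≤ maxR c ∧
      (∀ y, c'.y0 ≤ y → y ≤ c'.y1 → c.l y ≤ c'.l y ∧ c'.r y = c.r y) := by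
  set m := minL c with hm
  set T : Finset ℤ := (Finset.Icc c.y0 c.y1).filter (fun y => m + 1 ≤ c.r y) with hT
  have hTne : T.Nonempty := by
    obtain ⟨y, h1, h2, h3⟩ := maxR_attained c hc.1
    exact ⟨y, by simp [hT, Finset.mem_Icc, h1, h2]; omega⟩
  set p0 := T.min' hTne with hp0
  set p1 := T.max' hTne with hp1
  have hp0T : p0 ∈ T := Finset.min'_mem _ _
  have hp1T : p1 ∈ T := Finset.max'_mem _ _
  rw [hT, Finset.mem_filter, Finset.mem_Icc] at hp0T hp1T
  have hp01 : p0 ≤ p1 := Finset.min'_le _ _ (Finset.max'_mem _ _)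
  -- all rows in [p0, p1] survive
  have hsurv : ∀ y, p0 ≤ y → y ≤ p1 → m + 1 ≤ c.r y := by
    intro y h1 h2
    have := mountain c hc hp0T.1.1 h1 h2 hp1T.1.2
    omega
  have hTIcc : T = Finset.Icc p0 p1 := by
    apply Finset.Subset.antisymm
    · intro y hy
      rw [Finset.mem_Icc]
      exact ⟨Finset.min'_le _ _ hy, Finset.le_max' _ _ hy⟩
    · intro y hy
      rw [Finset.mem_Icc] at hy
      rw [hT, Finset.mem_filter, Finset.mem_Icc]
      exact ⟨⟨le_trans hp0T.1.1 hy.1, le_trans hy.2 hp1T.1.2⟩, hsurv y hy.1 hy.2⟩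
  set c' : Cfg := ⟨p0, p1, fun y => max (c.l y) (m + 1), c.r⟩ with hc'
  have hlm : ∀ y, c.y0 ≤ y → y ≤ c.y1 → m ≤ c.l y := fun y h1 h2 => minL_le c hc.1 h1 h2
  have hok : Ok c' := by
    obtain ⟨hy, hlr, hcons, hcol⟩ := hc
    refine ⟨hp01, ?_, ?_, ?_⟩
    · intro y h1 h2
      simp only [hc'] at h1 h2
      simp only [hc', max_le_iff]
      exact ⟨hlr y (le_trans hp0T.1.1 h1) (le_trans h2 hp1T.1.2), hsurv y h1 h2⟩
    · intro y h1 h2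
      simp only [hc'] at h1 h2
      simp only [hc', max_le_iff]
      have hcc := hcons y (le_trans hp0T.1.1 h1) (by omega)
      refine ⟨⟨hcc.1, hsurv y h1 (by omega)⟩, hcc.2, hsurv (y+1) (by omega) h2⟩
    · intro x a b d h1 h2 h3 h4 g1 g2 g3 g4
      simp only [hc'] at h1 h4
      simp only [hc', max_le_iff] at g1 g3 ⊢
      have := hcol x a b d (le_trans hp0T.1.1 h1) h2 h3 (le_trans h4 hp1T.1.2)
        g1.1 g2 g3.1 g4
      exact ⟨⟨this.1, g1.2⟩, this.2⟩
  refine ⟨c', hok, ?_, hp0T.1.1, hp1T.1.2, ?_, ?_, fun y h1 h2 => ⟨le_max_left _ _, rfl⟩⟩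
  · -- area computation
    have key : ∀ y ∈ Finset.Icc c.y0 c.y1, (c.r y - c.l y + 1) =
        (if m + 1 ≤ c.r y then (c.r y - max (c.l y) (m+1) + 1) else 0) +
        (if c.l y = m then 1 else 0) := by
      intro y hy
      rw [Finset.mem_Icc] at hy
      have h1 := hlm y hy.1 hy.2
      have h2 := hc.2.1 y hy.1 hy.2
      split_ifs <;> omega
    have e1 : area c = (∑ y ∈ Finset.Icc c.y0 c.y1,
        if m + 1 ≤ c.r y then (c.r y - max (c.l y) (m+1) + 1) else 0) +
        (∑ y ∈ Finset.Icc c.y0 c.y1, if c.l y = m then (1:ℤ) else 0) := by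
      rw [area, ← Finset.sum_add_distrib]
      exact Finset.sum_congr rfl key
    have e2 : (∑ y ∈ Finset.Icc c.y0 c.y1, if c.l y = m then (1:ℤ) else 0) =
        ((colL c).card : ℤ) := by
      rw [colL, ← hm, ← Finset.sum_filter]
      simp
    have e3 : (∑ y ∈ Finset.Icc c.y0 c.y1,
        if m + 1 ≤ c.r y then (c.r y - max (c.l y) (m+1) + 1) else 0) = area c' := by
      rw [← Finset.sum_filter, ← hT, hTIcc]
      rfl
    rw [e3] at e1; rw [e2] at e1; omega
  · exact le_minL c' hok.1 (fun y h1 h2 => le_max_right _ _)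
  · exact maxR_le c' hok.1 (fun y h1 h2 => le_maxR c hc.1 (le_trans hp0T.1.1 h1) (le_trans h2 hp1T.1.2))



lemma minL_mux (c : Cfg) (h : c.y0 ≤ c.y1) : minL (mux c) = -(maxR c) := by
  apply le_antisymm
  · obtain ⟨y, h1, h2, h3⟩ := maxR_attained c h
    have : minL (mux c) ≤ -c.r y := minL_le (mux c) h (y := y) h1 h2
    omega
  · exact le_minL (mux c) h (fun y h1 h2 => by
      show -(maxR c) ≤ -(c.r y)
      have := le_maxR c h h1 h2
      omega)

lemma maxR_mux (c : Cfg) (h : c.y0 ≤ c.y1) : maxR (mux c) = -(minL c) := by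
  apply le_antisymm
  · exact maxR_le (mux c) h (fun y h1 h2 => by
      show -(c.l y) ≤ -(minL c)
      have := minL_le c h h1 h2
      omega)
  · obtain ⟨y, h1, h2, h3⟩ := minL_attained c h
    have : -c.l y ≤ maxR (mux c) := le_maxR (mux c) h (y := y) h1 h2
    omega

lemma colL_mux (c : Cfg) (h : c.y0 ≤ c.y1) : colL (mux c) = colR c := by
  unfold colL colR
  apply Finset.filter_congr
  intro y _
  rw [minL_mux c h]
  show -c.r y = -maxR c ↔ _
  constructor
  · intro hh; omega
  · intro hh; omega

lemma colR_nonempty (c : Cfg) (hc : Ok c) : (colR c).Nonempty := by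
  obtain ⟨y, h1, h2, h3⟩ := maxR_attained c hc.1
  exact ⟨y, by simp [colR, Finset.mem_Icc, h1, h2, h3]⟩

/-- Square predicate. -/
def Sq (c : Cfg) (s : ℤ) : Prop :=
  ∃ a b, c.y0 ≤ b ∧ b + s - 1 ≤ c.y1 ∧
    ∀ y, b ≤ y → y ≤ b + s - 1 → c.l y ≤ a ∧ a + s - 1 ≤ c.r y

lemma sq_mux (c : Cfg) (s : ℤ) (hs : Sq (mux c) s) : Sq c s := by
  obtain ⟨a, b, h1, h2, h3⟩ := hs
  refine ⟨-(a + s - 1), b, h1, h2, fun y hy1 hy2 => ?_⟩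
  obtain ⟨g1, g2⟩ := h3 y hy1 hy2
  have g1' : -c.r y ≤ a := g1
  have g2' : a + s - 1 ≤ -c.l y := g2
  omega

def Result (c : Cfg) : Prop :=
  ∃ s, 1 ≤ s ∧ Sq c s ∧
    area c ≤ s * ((maxR c - minL c + 1) + (c.y1 - c.y0 + 1))

lemma combine (c c' : Cfg) (hok' : Ok c') (k s' : ℤ) (hk : 1 ≤ k) (hs' : 1 ≤ s')
    (harea : area c ≤ area c' + k)
    (hwh : (maxR c' - minL c' + 1) + (c'.y1 - c'.y0 + 1) + 1 ≤
      (maxR c - minL c + 1) + (c.y1 - c.y0 + 1))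
    (hsqk : Sq c k) (hsqs : Sq c s')
    (hbound' : area c' ≤ s' * ((maxR c' - minL c' + 1) + (c'.y1 - c'.y0 + 1))) :
    Result c := by
  set W' := (maxR c' - minL c' + 1) + (c'.y1 - c'.y0 + 1) with hW'
  set W := (maxR c - minL c + 1) + (c.y1 - c.y0 + 1) with hW
  have hW'0 : 0 ≤ W' := by
    have h1 := minL_le_maxR c' hok'
    have h2 := hok'.1
    omega
  rcases le_total s' k with hsk | hsk
  · refine ⟨k, hk, hsqk, ?_⟩
    have e1 : s' * W' ≤ k * W' := mul_le_mul_of_nonneg_right hsk hW'0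
    have e2 : k * W' ≤ k * (W - 1) := mul_le_mul_of_nonneg_left (by omega) (by omega)
    have e3 : k * (W - 1) + k = k * W := by ring
    show area c ≤ k * W
    omega
  · refine ⟨s', hs', hsqs, ?_⟩
    have e1 : s' * W' ≤ s' * (W - 1) := mul_le_mul_of_nonneg_left (by omega) (by omega)
    have e3 : s' * (W - 1) + s' = s' * W := by ring
    show area c ≤ s' * W
    omega



theorem mainAbs : ∀ (n : ℕ) (c : Cfg), Ok c → (area c).toNat ≤ n → Result c := by
  intro n
  induction n with
  | zero =>
    intro c hc hn
    have h1 := area_pos c hc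
    have h2 := hc.1
    omega
  | succ n ih =>
    intro c hc hn
    have hy01 := hc.1
    have hlr0 := hc.2.1 c.y0 (le_refl _) hc.1
    have hlr1 := hc.2.1 c.y1 hc.1 (le_refl _)
    have hminL0 := minL_le c hc.1 (le_refl c.y0) hc.1
    have hminL1 := minL_le c hc.1 hc.1 (le_refl c.y1)
    have hmaxR0 := le_maxR c hc.1 (le_refl c.y0) hc.1
    have hmaxR1 := le_maxR c hc.1 hc.1 (le_refl c.y1)
    -- base case: single row
    by_cases hy : c.y1 ≤ c.y0
    · have hy' : c.y1 = c.y0 := le_antisymm hy hc.1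
      refine ⟨1, le_refl _, ⟨c.l c.y0, c.y0, le_refl _, by omega, fun y h1 h2 => ?_⟩, ?_⟩
      · have : y = c.y0 := by omega
        subst this
        omega
      · have : area c = c.r c.y0 - c.l c.y0 + 1 := by
          rw [area, hy', Finset.Icc_self, Finset.sum_singleton]
        have h2 := minL_le_maxR c hc
        omega
    push_neg at hy
    -- base case: single column
    by_cases hx : maxR c ≤ minL c
    · have hcols : ∀ y, c.y0 ≤ y → y ≤ c.y1 → c.l y = minL c ∧ c.r y = minL c := by
        intro y h1 h2
        have g1 := minL_le c hc.1 h1 h2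
        have g2 := le_maxR c hc.1 h1 h2
        have g3 := hc.2.1 y h1 h2
        omega
      refine ⟨1, le_refl _, ⟨minL c, c.y0, le_refl _, by omega, fun y h1 h2 => ?_⟩, ?_⟩
      · have := hcols y (by omega) (by omega)
        omega
      · have : area c = ∑ y ∈ Finset.Icc c.y0 c.y1, 1 := by
          rw [area]
          apply Finset.sum_congr rfl
          intro y hyy
          rw [Finset.mem_Icc] at hyy
          have := hcols y hyy.1 hyy.2
          omega
        rw [this, Finset.sum_const, Int.card_Icc]
        simp [smul_eq_mul]
        omega
    push_neg at hx
    -- main case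
    set Lb := c.r c.y0 - c.l c.y0 + 1 with hLb
    set Lt := c.r c.y1 - c.l c.y1 + 1 with hLt
    set HL := ((colL c).card : ℤ) with hHL
    set HR := ((colR c).card : ℤ) with hHR
    have hHL1 : 1 ≤ HL := by
      have := Finset.card_pos.2 (colL_nonempty c hc)
      omega
    have hHR1 : 1 ≤ HR := by
      have := Finset.card_pos.2 (colR_nonempty c hc)
      omega
    set k := min (min Lb Lt) (min HL HR) with hk
    have hk1 : 1 ≤ k := by omega
    have hkLb : k ≤ Lb := by omega
    have hkLt : k ≤ Lt := by omega
    have hkHL : k ≤ HL := by omega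
    have hkHR : k ≤ HR := by omega
    -- the k-square
    have hsqk : Sq c k := by
      obtain ⟨b, h1, h2, h3⟩ := sq c hc k hk1 hkLb hkLt hkHL
      exact ⟨minL c, b, h1, h2, h3⟩
    have harea_pos := area_pos c hc
    have hcase : k = Lb ∨ k = Lt ∨ k = HL ∨ k = HR := by omega
    rcases hcase with hcK | hcK | hcK | hcK
    · -- peel bottom
      obtain ⟨hok', harea', hm1, hm2⟩ := peelBottom c hc hy
      set c' : Cfg := ⟨c.y0 + 1, c.y1, c.l, c.r⟩ with hc'
      have hmeas : (area c').toNat ≤ n := by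
        have := area_pos c' hok'
        omega
      obtain ⟨s', hs1', hsq', hbound'⟩ := ih c' hok' hmeas
      have hsqs : Sq c s' := by
        obtain ⟨a, b, g1, g2, g3⟩ := hsq'
        exact ⟨a, b, by simp only [hc'] at g1; omega, g2, g3⟩
      refine combine c c' hok' k s' hk1 hs1' (by omega) ?_ hsqk hsqs hbound'
      have ey0 : c'.y0 = c.y0 + 1 := rfl
      have ey1 : c'.y1 = c.y1 := rfl
      omega
    · -- peel top
      obtain ⟨hok', harea', hm1, hm2⟩ := peelTop c hc hy
      set c' : Cfg := ⟨c.y0, c.y1 - 1, c.l, c.r⟩ with hc'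
      have hmeas : (area c').toNat ≤ n := by
        have := area_pos c' hok'
        omega
      obtain ⟨s', hs1', hsq', hbound'⟩ := ih c' hok' hmeas
      have hsqs : Sq c s' := by
        obtain ⟨a, b, g1, g2, g3⟩ := hsq'
        exact ⟨a, b, g1, by simp only [hc'] at g2; omega, g3⟩
      refine combine c c' hok' k s' hk1 hs1' (by omega) ?_ hsqk hsqs hbound'
      have ey0 : c'.y0 = c.y0 := rfl
      have ey1 : c'.y1 = c.y1 - 1 := rfl
      omega
    · -- peel left
      obtain ⟨c', hok', harea', hr1, hr2, hr3, hr4, hr5⟩ := peelLeft c hc hx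
      have hmeas : (area c').toNat ≤ n := by
        have := area_pos c' hok'
        have := hok'.1
        omega
      obtain ⟨s', hs1', hsq', hbound'⟩ := ih c' hok' hmeas
      have hsqs : Sq c s' := by
        obtain ⟨a, b, g1, g2, g3⟩ := hsq'
        refine ⟨a, b, by omega, by omega, fun y hy1 hy2 => ?_⟩
        obtain ⟨e1, e2⟩ := g3 y hy1 hy2
        obtain ⟨f1, f2⟩ := hr5 y (by omega) (by omega)
        constructor
        · omega
        · rw [← f2]; omega
      refine combine c c' hok' k s' hk1 hs1' (by omega) (by omega) hsqk hsqs hbound'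
    · -- peel right: mirror then peel left
      set d := mux c with hd
      have hokd : Ok d := ok_mux c hc
      have hxd : minL d + 1 ≤ maxR d := by
        rw [hd, minL_mux c hc.1, maxR_mux c hc.1]
        omega
      obtain ⟨d', hok', harea', hr1, hr2, hr3, hr4, hr5⟩ := peelLeft d hokd hxd
      have haread : area d = area c := area_mux c
      have hcold : ((colL d).card : ℤ) = HR := by
        rw [hd, colL_mux c hc.1, hHR]
      have hmeas : (area d').toNat ≤ n := by
        have := area_pos d' hok'
        have := hok'.1
        omega
      obtain ⟨s', hs1', hsq', hbound'⟩ := ih d' hok' hmeas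
      have hsqd : Sq d s' := by
        obtain ⟨a, b, g1, g2, g3⟩ := hsq'
        refine ⟨a, b, by simp only [hd, mux] at hr1 ⊢; omega,
          by simp only [hd, mux] at hr2 ⊢; omega, fun y hy1 hy2 => ?_⟩
        obtain ⟨e1, e2⟩ := g3 y (by omega) (by omega)
        obtain ⟨f1, f2⟩ := hr5 y (by omega) (by omega)
        constructor
        · omega
        · rw [← f2]; omega
      have hsqs : Sq c s' := sq_mux c s' hsqd
      refine combine c d' hok' k s' hk1 hs1' (by omega) ?_ hsqk hsqs hbound'
      have e1 : minL d = -(maxR c) := minL_mux c hc.1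
      have e2 : maxR d = -(minL c) := maxR_mux c hc.1
      have e3 : d.y0 = c.y0 := rfl
      have e4 : d.y1 = c.y1 := rfl
      omega



/-! ### Bridge from Finset world -/

section Bridge

def CellAdj' (a b : ℤ × ℤ) : Prop :=
  (a.1 = b.1 ∧ (a.2 - b.2).natAbs = 1) ∨ (a.2 = b.2 ∧ (a.1 - b.1).natAbs = 1)

variable {S : Finset (ℤ × ℤ)}

lemma adj_cases {a b : ℤ × ℤ} (h : CellAdj' a b) :
    b = (a.1, a.2 + 1) ∨ b = (a.1, a.2 - 1) ∨ b = (a.1 + 1, a.2) ∨ b = (a.1 - 1, a.2) := by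
  obtain ⟨a1, a2⟩ := a
  obtain ⟨b1, b2⟩ := b
  rcases h with ⟨h1, h2⟩ | ⟨h1, h2⟩ <;> simp_all [Prod.ext_iff] <;> omega

/-- Crossing a horizontal line. -/
lemma cross_row (hconn : ∀ a ∈ S, ∀ b ∈ S,
      Relation.ReflTransGen (fun x y => x ∈ S ∧ y ∈ S ∧ CellAdj' x y) a b)
    {p q : ℤ × ℤ} (hp : p ∈ S) (hq : q ∈ S) (y : ℤ) (h1 : p.2 ≤ y) (h2 : y + 1 ≤ q.2) :
    ∃ x, (x, y) ∈ S ∧ (x, y + 1) ∈ S := by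
  have hpath := hconn p hp q hq
  clear hp
  revert h1
  induction hpath using Relation.ReflTransGen.head_induction_on with
  | refl => intro h1; omega
  | @head a c hrel hpath ih =>
    intro h1
    obtain ⟨haS, hcS, hadj⟩ := hrel
    by_cases hcy : c.2 ≤ y
    · exact ih hcy
    · rcases adj_cases hadj with h | h | h | h <;> rw [h] at hcS hcy <;> simp at hcy
      · have hy' : a.2 = y := by omega
        refine ⟨a.1, ?_, ?_⟩
        · rw [← hy', Prod.mk.eta]; exact haS
        · rw [← hy']; exact hcS
      all_goals omega

/-- Every row between two occupied rows is occupied. -/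
lemma row_between (hconn : ∀ a ∈ S, ∀ b ∈ S,
      Relation.ReflTransGen (fun x y => x ∈ S ∧ y ∈ S ∧ CellAdj' x y) a b)
    {p q : ℤ × ℤ} (hp : p ∈ S) (hq : q ∈ S) (y : ℤ) (h1 : p.2 ≤ y) (h2 : y ≤ q.2) :
    ∃ x, (x, y) ∈ S := by
  have hpath := hconn p hp q hq
  clear hp
  revert h1
  induction hpath using Relation.ReflTransGen.head_induction_on with
  | refl =>
    intro h1
    have : q.2 = y := by omega
    exact ⟨q.1, by rw [← this, Prod.mk.eta]; exact hq⟩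
  | @head a c hrel hpath ih =>
    intro h1
    obtain ⟨haS, hcS, hadj⟩ := hrel
    by_cases hcy : c.2 ≤ y
    · exact ih hcy
    · refine ⟨a.1, ?_⟩
      rcases adj_cases hadj with h | h | h | h <;> rw [h] at hcS hcy <;> simp at hcy <;>
        have hy' : a.2 = y := by omega
      all_goals (rw [← hy', Prod.mk.eta]; exact haS)

/-- Every column between two occupied columns is occupied. -/
lemma col_between (hconn : ∀ a ∈ S, ∀ b ∈ S,
      Relation.ReflTransGen (fun x y => x ∈ S ∧ y ∈ S ∧ CellAdj' x y) a b)
    {p q : ℤ × ℤ} (hp : p ∈ S) (hq : q ∈ S) (x : ℤ) (h1 : p.1 ≤ x) (h2 : x ≤ q.1) :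
    ∃ y, (x, y) ∈ S := by
  have hpath := hconn p hp q hq
  clear hp
  revert h1
  induction hpath using Relation.ReflTransGen.head_induction_on with
  | refl =>
    intro h1
    have : q.1 = x := by omega
    exact ⟨q.2, by rw [← this, Prod.mk.eta]; exact hq⟩
  | @head a c hrel hpath ih =>
    intro h1
    obtain ⟨haS, hcS, hadj⟩ := hrel
    by_cases hcy : c.1 ≤ x
    · exact ih hcy
    · refine ⟨a.2, ?_⟩
      rcases adj_cases hadj with h | h | h | h <;> rw [h] at hcS hcy <;> simp at hcy <;>
        have hy' : a.1 = x := by omega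
      all_goals (rw [← hy', Prod.mk.eta]; exact haS)



end Bridge

def rowF (S : Finset (ℤ × ℤ)) (y : ℤ) : Finset ℤ := (S.filter (fun p => p.2 = y)).image Prod.fst

def y0S (S : Finset (ℤ × ℤ)) : ℤ := ((S.image Prod.snd).min).untopD 0
def y1S (S : Finset (ℤ × ℤ)) : ℤ := ((S.image Prod.snd).max).unbotD 0
def lfS (S : Finset (ℤ × ℤ)) (y : ℤ) : ℤ := ((rowF S y).min).untopD 0
def rfS (S : Finset (ℤ × ℤ)) (y : ℤ) : ℤ := ((rowF S y).max).unbotD 0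

def cfgS (S : Finset (ℤ × ℤ)) : Cfg := ⟨y0S S, y1S S, lfS S, rfS S⟩

section Bridge2

variable {S : Finset (ℤ × ℤ)} (hne : S.Nonempty)
  (hconn : ∀ a ∈ S, ∀ b ∈ S,
    Relation.ReflTransGen (fun x y => x ∈ S ∧ y ∈ S ∧ CellAdj' x y) a b)
  (hrow : ∀ x₁ x₂ x₃ y : ℤ, x₁ ≤ x₂ → x₂ ≤ x₃ → (x₁, y) ∈ S → (x₃, y) ∈ S → (x₂, y) ∈ S)
  (hcol : ∀ x y₁ y₂ y₃ : ℤ, y₁ ≤ y₂ → y₂ ≤ y₃ → (x, y₁) ∈ S → (x, y₃) ∈ S → (x, y₂) ∈ S)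

include hne in
lemma y0S_le {p : ℤ × ℤ} (hp : p ∈ S) : y0S S ≤ p.2 ∧ p.2 ≤ y1S S := by
  have h1 : (S.image Prod.snd).Nonempty := hne.image _
  have e0 : y0S S = (S.image Prod.snd).min' h1 := by
    rw [y0S, ← Finset.coe_min' h1]; rfl
  have e1 : y1S S = (S.image Prod.snd).max' h1 := by
    rw [y1S, ← Finset.coe_max' h1]; rfl
  rw [e0, e1]
  exact ⟨Finset.min'_le _ _ (Finset.mem_image_of_mem _ hp),
    Finset.le_max' _ _ (Finset.mem_image_of_mem _ hp)⟩

include hne in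
lemma y0S_mem : ∃ x, (x, y0S S) ∈ S := by
  have h1 : (S.image Prod.snd).Nonempty := hne.image _
  have e0 : y0S S = (S.image Prod.snd).min' h1 := by
    rw [y0S, ← Finset.coe_min' h1]; rfl
  have := Finset.min'_mem _ h1
  rw [← e0] at this
  obtain ⟨p, hp, hp2⟩ := Finset.mem_image.1 this
  exact ⟨p.1, by rw [← hp2, Prod.mk.eta]; exact hp⟩

include hne in
lemma y1S_mem : ∃ x, (x, y1S S) ∈ S := by
  have h1 : (S.image Prod.snd).Nonempty := hne.image _
  have e1 : y1S S = (S.image Prod.snd).max' h1 := by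
    rw [y1S, ← Finset.coe_max' h1]; rfl
  have := Finset.max'_mem _ h1
  rw [← e1] at this
  obtain ⟨p, hp, hp2⟩ := Finset.mem_image.1 this
  exact ⟨p.1, by rw [← hp2, Prod.mk.eta]; exact hp⟩

lemma rowF_mem {x y : ℤ} : x ∈ rowF S y ↔ (x, y) ∈ S := by
  rw [rowF, Finset.mem_image]
  constructor
  · rintro ⟨p, hp, rfl⟩
    rw [Finset.mem_filter] at hp
    rw [← hp.2, Prod.mk.eta]
    exact hp.1
  · intro h
    exact ⟨(x, y), Finset.mem_filter.2 ⟨h, rfl⟩, rfl⟩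

lemma lf_le {x y : ℤ} (h : (x, y) ∈ S) : lfS S y ≤ x ∧ x ≤ rfS S y := by
  have h1 : (rowF S y).Nonempty := ⟨x, rowF_mem.2 h⟩
  have e0 : lfS S y = (rowF S y).min' h1 := by
    rw [lfS, ← Finset.coe_min' h1]; rfl
  have e1 : rfS S y = (rowF S y).max' h1 := by
    rw [rfS, ← Finset.coe_max' h1]; rfl
  rw [e0, e1]
  exact ⟨Finset.min'_le _ _ (rowF_mem.2 h), Finset.le_max' _ _ (rowF_mem.2 h)⟩

lemma lf_mem {y : ℤ} (h : ∃ x, (x, y) ∈ S) : (lfS S y, y) ∈ S ∧ (rfS S y, y) ∈ S := by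
  obtain ⟨x, hx⟩ := h
  have h1 : (rowF S y).Nonempty := ⟨x, rowF_mem.2 hx⟩
  have e0 : lfS S y = (rowF S y).min' h1 := by
    rw [lfS, ← Finset.coe_min' h1]; rfl
  have e1 : rfS S y = (rowF S y).max' h1 := by
    rw [rfS, ← Finset.coe_max' h1]; rfl
  constructor
  · rw [← rowF_mem, e0]; exact Finset.min'_mem _ _
  · rw [← rowF_mem, e1]; exact Finset.max'_mem _ _

include hne hconn in
lemma row_ne {y : ℤ} (h1 : y0S S ≤ y) (h2 : y ≤ y1S S) : ∃ x, (x, y) ∈ S := by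
  obtain ⟨x0, hx0⟩ := y0S_mem hne
  obtain ⟨x1, hx1⟩ := y1S_mem hne
  exact row_between hconn hx0 hx1 y h1 h2

include hne hconn hrow in
lemma memS {x y : ℤ} : (x, y) ∈ S ↔
    (y0S S ≤ y ∧ y ≤ y1S S ∧ lfS S y ≤ x ∧ x ≤ rfS S y) := by
  constructor
  · intro h
    have h1 := y0S_le hne h
    have h2 := lf_le h
    exact ⟨h1.1, h1.2, h2.1, h2.2⟩
  · rintro ⟨h1, h2, h3, h4⟩
    have hrne := row_ne hne hconn h1 h2
    have hm := lf_mem hrne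
    exact hrow (lfS S y) x (rfS S y) y h3 h4 hm.1 hm.2

include hne hconn hrow hcol

lemma okS : Ok (cfgS S) := by
  refine ⟨?_, ?_, ?_, ?_⟩
  · obtain ⟨p, hp⟩ := id hne
    have := y0S_le hne hp
    show y0S S ≤ y1S S
    omega
  · intro y h1 h2
    have h1' : y0S S ≤ y := h1
    have h2' : y ≤ y1S S := h2
    obtain ⟨x, hx⟩ := row_ne hne hconn h1' h2'
    have := lf_le hx
    show lfS S y ≤ rfS S y
    omega
  · intro y h1 h2
    have h1' : y0S S ≤ y := h1
    have h2' : y + 1 ≤ y1S S := h2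
    obtain ⟨x0, hx0⟩ := row_ne hne hconn h1' (by omega)
    obtain ⟨x1, hx1⟩ := row_ne hne hconn (by omega) h2'
    obtain ⟨x, hxa, hxb⟩ := cross_row hconn hx0 hx1 y (le_refl _) (le_refl _)
    have e1 := lf_le hxa
    have e2 := lf_le hxb
    constructor
    · show lfS S (y+1) ≤ rfS S y
      omega
    · show lfS S y ≤ rfS S (y+1)
      omega
  · intro x a b d h1 h2 h3 h4 g1 g2 g3 g4
    have h1' : y0S S ≤ a := h1
    have h4' : d ≤ y1S S := h4
    have g1' : lfS S a ≤ x := g1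
    have g2' : x ≤ rfS S a := g2
    have g3' : lfS S d ≤ x := g3
    have g4' : x ≤ rfS S d := g4
    have hb1 : (x, a) ∈ S := (memS hne hconn hrow).2 ⟨h1', by omega, g1', g2'⟩
    have hb2 : (x, d) ∈ S := (memS hne hconn hrow).2 ⟨by omega, h4', g3', g4'⟩
    have hmid := hcol x a b d h2 h3 hb1 hb2
    have := lf_le hmid
    exact ⟨this.1, this.2⟩



lemma rowcard {y : ℤ} (h1 : y0S S ≤ y) (h2 : y ≤ y1S S) :
    (S.filter (fun p => p.2 = y)).card = (rfS S y - lfS S y + 1).toNat := by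
  have he : S.filter (fun p => p.2 = y) =
      (Finset.Icc (lfS S y) (rfS S y)).image (fun x => (x, y)) := by
    ext ⟨px, py⟩
    rw [Finset.mem_filter, Finset.mem_image]
    constructor
    · rintro ⟨hp, rfl⟩
      have := (memS hne hconn hrow).1 hp
      exact ⟨px, Finset.mem_Icc.2 ⟨this.2.2.1, this.2.2.2⟩, rfl⟩
    · rintro ⟨x, hx, hxy⟩
      rw [Finset.mem_Icc] at hx
      injection hxy with e1 e2
      subst e1; subst e2
      exact ⟨(memS hne hconn hrow).2 ⟨h1, h2, hx.1, hx.2⟩, rfl⟩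
  rw [he, Finset.card_image_of_injective _ (fun a b hab => by injection hab),
    Int.card_Icc]
  congr 1
  omega

lemma card_eq_area : (S.card : ℤ) = area (cfgS S) := by
  have hfib : S.card = ∑ y ∈ Finset.Icc (y0S S) (y1S S), (S.filter (fun p => p.2 = y)).card := by
    apply Finset.card_eq_sum_card_fiberwise
    intro p hp
    rw [Finset.mem_coe, Finset.mem_Icc]
    exact ⟨(y0S_le hne hp).1, (y0S_le hne hp).2⟩
  rw [hfib, area]
  rw [Nat.cast_sum]
  apply Finset.sum_congr rfl
  intro y hy
  rw [Finset.mem_Icc] at hy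
  rw [rowcard hne hconn hrow hcol hy.1 hy.2]
  have hok := okS hne hconn hrow hcol
  have := hok.2.1 y hy.1 hy.2
  have h1 : lfS S y ≤ rfS S y := this
  rw [Int.toNat_of_nonneg (by omega)]
  rfl

lemma xs_eq : S.image Prod.fst = Finset.Icc (minL (cfgS S)) (maxR (cfgS S)) := by
  have hok := okS hne hconn hrow hcol
  ext x
  rw [Finset.mem_image, Finset.mem_Icc]
  constructor
  · rintro ⟨p, hp, rfl⟩
    have hy := y0S_le hne hp
    have h2 := lf_le (show (p.1, p.2) ∈ S by rwa [Prod.mk.eta])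
    have h3 : minL (cfgS S) ≤ lfS S p.2 := minL_le (cfgS S) hok.1 hy.1 hy.2
    have h4 : rfS S p.2 ≤ maxR (cfgS S) := le_maxR (cfgS S) hok.1 hy.1 hy.2
    exact ⟨by omega, by omega⟩
  · rintro ⟨hx1, hx2⟩
    obtain ⟨ya, ha1, ha2, ha3⟩ := minL_attained (cfgS S) hok.1
    obtain ⟨yb, hb1, hb2, hb3⟩ := maxR_attained (cfgS S) hok.1
    have hma : (lfS S ya, ya) ∈ S := (lf_mem (row_ne hne hconn ha1 ha2)).1
    have hmb : (rfS S yb, yb) ∈ S := (lf_mem (row_ne hne hconn hb1 hb2)).2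
    have hcomp1 : (lfS S ya, ya).1 ≤ x := by
      have : lfS S ya = minL (cfgS S) := ha3
      simp only [this]
      exact hx1
    have hcomp2 : x ≤ (rfS S yb, yb).1 := by
      have : rfS S yb = maxR (cfgS S) := hb3
      simp only [this]
      exact hx2
    obtain ⟨y, hy⟩ := col_between hconn hma hmb x hcomp1 hcomp2
    exact ⟨(x, y), hy, rfl⟩

lemma ys_eq : S.image Prod.snd = Finset.Icc (y0S S) (y1S S) := by
  ext y
  rw [Finset.mem_image, Finset.mem_Icc]
  constructor
  · rintro ⟨p, hp, rfl⟩
    exact y0S_le hne hp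
  · rintro ⟨h1, h2⟩
    obtain ⟨x, hx⟩ := row_ne hne hconn h1 h2
    exact ⟨(x, y), hx, rfl⟩


end Bridge2


/-! ### Perimeter counting -/

section Perim

variable (S : Finset (ℤ × ℤ))

def USet : Finset (ℤ × ℤ) := S.filter (fun p => ((p.1, p.2+1) : ℤ × ℤ) ∈ S)
def RSet : Finset (ℤ × ℤ) := S.filter (fun p => ((p.1+1, p.2) : ℤ × ℤ) ∈ S)

lemma U_bound : (USet S).card + (S.image Prod.fst).card ≤ S.card := by
  have hsplit := Finset.card_filter_add_card_filter_not
    (s := S) (p := fun p => ((p.1, p.2+1) : ℤ × ℤ) ∈ S)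
  have hsurj : (S.image Prod.fst).card ≤
      (S.filter (fun p => ¬ ((p.1, p.2+1) : ℤ × ℤ) ∈ S)).card := by
    apply Finset.card_le_card_of_surjOn Prod.fst
    intro x hx
    simp only [Finset.coe_image, Set.mem_image, Finset.mem_coe] at hx
    obtain ⟨p, hp, rfl⟩ := hx
    obtain ⟨q, hq, hmax⟩ := Finset.exists_max_image
      (S.filter (fun q => q.1 = p.1)) Prod.snd ⟨p, Finset.mem_filter.2 ⟨hp, rfl⟩⟩
    rw [Finset.mem_filter] at hq
    refine ⟨q, ?_, hq.2⟩
    simp only [Finset.mem_coe, Finset.mem_filter]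
    refine ⟨hq.1, fun hcon => ?_⟩
    have : ((q.1, q.2+1) : ℤ × ℤ) ∈ S.filter (fun r => r.1 = p.1) :=
      Finset.mem_filter.2 ⟨hcon, hq.2⟩
    have := hmax _ this
    simp at this
  rw [USet]
  omega

lemma R_bound : (RSet S).card + (S.image Prod.snd).card ≤ S.card := by
  have hsplit := Finset.card_filter_add_card_filter_not
    (s := S) (p := fun p => ((p.1+1, p.2) : ℤ × ℤ) ∈ S)
  have hsurj : (S.image Prod.snd).card ≤
      (S.filter (fun p => ¬ ((p.1+1, p.2) : ℤ × ℤ) ∈ S)).card := by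
    apply Finset.card_le_card_of_surjOn Prod.snd
    intro y hy
    simp only [Finset.coe_image, Set.mem_image, Finset.mem_coe] at hy
    obtain ⟨p, hp, rfl⟩ := hy
    obtain ⟨q, hq, hmax⟩ := Finset.exists_max_image
      (S.filter (fun q => q.2 = p.2)) Prod.fst ⟨p, Finset.mem_filter.2 ⟨hp, rfl⟩⟩
    rw [Finset.mem_filter] at hq
    refine ⟨q, ?_, hq.2⟩
    simp only [Finset.mem_coe, Finset.mem_filter]
    refine ⟨hq.1, fun hcon => ?_⟩
    have : ((q.1+1, q.2) : ℤ × ℤ) ∈ S.filter (fun r => r.2 = p.2) :=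
      Finset.mem_filter.2 ⟨hcon, hq.2⟩
    have := hmax _ this
    simp at this
  rw [RSet]
  omega

lemma adj_iff (a b : ℤ × ℤ) : CellAdj' a b ↔
    (b = (a.1, a.2 + 1) ∨ b = (a.1, a.2 - 1) ∨ b = (a.1 + 1, a.2) ∨ b = (a.1 - 1, a.2)) := by
  obtain ⟨a1, a2⟩ := a
  obtain ⟨b1, b2⟩ := b
  simp only [CellAdj', Prod.mk.injEq]
  omega

instance instDecCellAdj' : ∀ a b : ℤ × ℤ, Decidable (CellAdj' a b) := fun a b => by
  unfold CellAdj'; infer_instance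

lemma pairs_eq : ((S ×ˢ S).filter (fun p : (ℤ × ℤ) × (ℤ × ℤ) => CellAdj' p.1 p.2)).card =
    2 * (USet S).card + 2 * (RSet S).card := by
  have h1 : ((S ×ˢ S).filter (fun p : (ℤ × ℤ) × (ℤ × ℤ) => CellAdj' p.1 p.2)) =
      ((S ×ˢ S).filter (fun p => p.2 = (p.1.1, p.1.2 + 1))) ∪
      (((S ×ˢ S).filter (fun p => p.2 = (p.1.1, p.1.2 - 1))) ∪
      (((S ×ˢ S).filter (fun p => p.2 = (p.1.1 + 1, p.1.2))) ∪
      ((S ×ˢ S).filter (fun p => p.2 = (p.1.1 - 1, p.1.2))))) := by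
    rw [← Finset.filter_or, ← Finset.filter_or, ← Finset.filter_or]
    exact Finset.filter_congr (fun p _ => adj_iff p.1 p.2)
  have dis : ∀ (f g : ℤ × ℤ → ℤ × ℤ), (∀ p : ℤ × ℤ, f p ≠ g p) →
      Disjoint ((S ×ˢ S).filter (fun p => p.2 = f p.1))
        ((S ×ˢ S).filter (fun p => p.2 = g p.1)) := by
    intro f g hfg
    rw [Finset.disjoint_left]
    intro p hp1 hp2
    rw [Finset.mem_filter] at hp1 hp2
    exact hfg p.1 (by rw [← hp1.2, hp2.2])
  have dir_card : ∀ e : ℤ × ℤ → ℤ × ℤ,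
      ((S ×ˢ S).filter (fun p : (ℤ × ℤ) × (ℤ × ℤ) => p.2 = e p.1)).card =
      (S.filter (fun q => e q ∈ S)).card := by
    intro e
    apply Finset.card_bij (fun p _ => p.1)
    · intro p hp
      rw [Finset.mem_filter, Finset.mem_product] at hp
      rw [Finset.mem_filter]
      exact ⟨hp.1.1, hp.2 ▸ hp.1.2⟩
    · intro a ha b hb hab
      rw [Finset.mem_filter] at ha hb
      have : a.2 = b.2 := by rw [ha.2, hb.2, hab]
      exact Prod.ext hab this
    · intro q hq
      rw [Finset.mem_filter] at hq
      exact ⟨(q, e q), Finset.mem_filter.2 ⟨Finset.mem_product.2 ⟨hq.1, hq.2⟩, rfl⟩, rfl⟩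
  have D_card : (S.filter (fun q => ((q.1, q.2 - 1) : ℤ × ℤ) ∈ S)).card = (USet S).card := by
    apply Finset.card_bij (fun q _ => ((q.1, q.2 - 1) : ℤ × ℤ))
    · intro q hq
      rw [Finset.mem_filter] at hq
      rw [USet, Finset.mem_filter]
      refine ⟨hq.2, ?_⟩
      show ((q.1, q.2 - 1 + 1) : ℤ × ℤ) ∈ S
      have e : q.2 - 1 + 1 = q.2 := by omega
      rw [e, Prod.mk.eta]
      exact hq.1
    · intro a ha b hb hab
      rw [Prod.ext_iff] at hab ⊢
      simp only at hab
      exact ⟨hab.1, by omega⟩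
    · intro u hu
      rw [USet, Finset.mem_filter] at hu
      refine ⟨((u.1, u.2 + 1) : ℤ × ℤ), ?_, ?_⟩
      · rw [Finset.mem_filter]
        refine ⟨hu.2, ?_⟩
        show ((u.1, u.2 + 1 - 1) : ℤ × ℤ) ∈ S
        have e : u.2 + 1 - 1 = u.2 := by omega
        rw [e, Prod.mk.eta]
        exact hu.1
      · show ((u.1, u.2 + 1 - 1) : ℤ × ℤ) = u
        have e : u.2 + 1 - 1 = u.2 := by omega
        rw [e, Prod.mk.eta]
  have L_card : (S.filter (fun q => ((q.1 - 1, q.2) : ℤ × ℤ) ∈ S)).card = (RSet S).card := by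
    apply Finset.card_bij (fun q _ => ((q.1 - 1, q.2) : ℤ × ℤ))
    · intro q hq
      rw [Finset.mem_filter] at hq
      rw [RSet, Finset.mem_filter]
      refine ⟨hq.2, ?_⟩
      show ((q.1 - 1 + 1, q.2) : ℤ × ℤ) ∈ S
      have e : q.1 - 1 + 1 = q.1 := by omega
      rw [e, Prod.mk.eta]
      exact hq.1
    · intro a ha b hb hab
      rw [Prod.ext_iff] at hab ⊢
      simp only at hab
      exact ⟨by omega, hab.2⟩
    · intro u hu
      rw [RSet, Finset.mem_filter] at hu
      refine ⟨((u.1 + 1, u.2) : ℤ × ℤ), ?_, ?_⟩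
      · rw [Finset.mem_filter]
        refine ⟨hu.2, ?_⟩
        show ((u.1 + 1 - 1, u.2) : ℤ × ℤ) ∈ S
        have e : u.1 + 1 - 1 = u.1 := by omega
        rw [e, Prod.mk.eta]
        exact hu.1
      · show ((u.1 + 1 - 1, u.2) : ℤ × ℤ) = u
        have e : u.1 + 1 - 1 = u.1 := by omega
        rw [e, Prod.mk.eta]
  have hne12 : ∀ p : ℤ × ℤ, ((p.1, p.2 + 1) : ℤ × ℤ) ≠ (p.1, p.2 - 1) := by
    intro p h; rw [Prod.ext_iff] at h; simp only at h; omega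
  have hne13 : ∀ p : ℤ × ℤ, ((p.1, p.2 + 1) : ℤ × ℤ) ≠ (p.1 + 1, p.2) := by
    intro p h; rw [Prod.ext_iff] at h; simp only at h; omega
  have hne14 : ∀ p : ℤ × ℤ, ((p.1, p.2 + 1) : ℤ × ℤ) ≠ (p.1 - 1, p.2) := by
    intro p h; rw [Prod.ext_iff] at h; simp only at h; omega
  have hne23 : ∀ p : ℤ × ℤ, ((p.1, p.2 - 1) : ℤ × ℤ) ≠ (p.1 + 1, p.2) := by
    intro p h; rw [Prod.ext_iff] at h; simp only at h; omega
  have hne24 : ∀ p : ℤ × ℤ, ((p.1, p.2 - 1) : ℤ × ℤ) ≠ (p.1 - 1, p.2) := by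
    intro p h; rw [Prod.ext_iff] at h; simp only at h; omega
  have hne34 : ∀ p : ℤ × ℤ, ((p.1 + 1, p.2) : ℤ × ℤ) ≠ (p.1 - 1, p.2) := by
    intro p h; rw [Prod.ext_iff] at h; simp only at h; omega
  rw [h1]
  rw [Finset.card_union_of_disjoint (Finset.disjoint_union_right.2
    ⟨dis _ _ hne12, Finset.disjoint_union_right.2 ⟨dis _ _ hne13, dis _ _ hne14⟩⟩)]
  rw [Finset.card_union_of_disjoint (Finset.disjoint_union_right.2
    ⟨dis _ _ hne23, dis _ _ hne24⟩)]
  rw [Finset.card_union_of_disjoint (dis _ _ hne34)]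
  have u1 : (Finset.filter (fun p : (ℤ × ℤ) × (ℤ × ℤ) => p.2 = (p.1.1, p.1.2 + 1)) (S ×ˢ S)).card
      = (S.filter (fun q => ((q.1, q.2 + 1) : ℤ × ℤ) ∈ S)).card := dir_card (fun a => (a.1, a.2 + 1))
  have u2 : (Finset.filter (fun p : (ℤ × ℤ) × (ℤ × ℤ) => p.2 = (p.1.1, p.1.2 - 1)) (S ×ˢ S)).card
      = (S.filter (fun q => ((q.1, q.2 - 1) : ℤ × ℤ) ∈ S)).card := dir_card (fun a => (a.1, a.2 - 1))
  have u3 : (Finset.filter (fun p : (ℤ × ℤ) × (ℤ × ℤ) => p.2 = (p.1.1 + 1, p.1.2)) (S ×ˢ S)).card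
      = (S.filter (fun q => ((q.1 + 1, q.2) : ℤ × ℤ) ∈ S)).card := dir_card (fun a => (a.1 + 1, a.2))
  have u4 : (Finset.filter (fun p : (ℤ × ℤ) × (ℤ × ℤ) => p.2 = (p.1.1 - 1, p.1.2)) (S ×ˢ S)).card
      = (S.filter (fun q => ((q.1 - 1, q.2) : ℤ × ℤ) ∈ S)).card := dir_card (fun a => (a.1 - 1, a.2))
  rw [u1, u2, u3, u4, D_card, L_card]
  rw [USet, RSet]
  omega

end Perim

end ConvPoly


/-- Every convex polyomino of area `A` and perimeter `P` contains an axis-aligned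
lattice square of side length at least `2A/P`. -/
theorem convex_polyomino_contains_square (S : Finset (ℤ × ℤ))
    (hS : IsPolyomino S) (hrow : RowConvex S) (hcol : ColConvex S) :
    ∃ (a b : ℤ) (s : ℕ),
      (2 * (S.card : ℚ)) / (polyPerimeter S : ℚ) ≤ (s : ℚ) ∧
      (Finset.Ico a (a + (s : ℤ))) ×ˢ (Finset.Ico b (b + (s : ℤ))) ⊆ S := by
  obtain ⟨hne, hconn⟩ := hS
  have hconn' : ∀ a ∈ S, ∀ b ∈ S, Relation.ReflTransGen
      (fun x y => x ∈ S ∧ y ∈ S ∧ ConvPoly.CellAdj' x y) a b := hconn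
  have hrow' : ∀ x₁ x₂ x₃ y : ℤ, x₁ ≤ x₂ → x₂ ≤ x₃ → (x₁, y) ∈ S → (x₃, y) ∈ S →
      (x₂, y) ∈ S := hrow
  have hcol' : ∀ x y₁ y₂ y₃ : ℤ, y₁ ≤ y₂ → y₂ ≤ y₃ → (x, y₁) ∈ S → (x, y₃) ∈ S →
      (x, y₂) ∈ S := hcol
  have hok := ConvPoly.okS hne hconn' hrow' hcol'
  obtain ⟨s, hs1, ⟨a, b, hb1, hb2, hsq⟩, hbound⟩ :=
    ConvPoly.mainAbs (ConvPoly.area (ConvPoly.cfgS S)).toNat (ConvPoly.cfgS S) hok (le_refl _)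
  refine ⟨a, b, s.toNat, ?_, ?_⟩
  · -- the numeric inequality
    have hcardA := ConvPoly.card_eq_area hne hconn' hrow' hcol'
    have hxs := ConvPoly.xs_eq hne hconn' hrow' hcol'
    have hys := ConvPoly.ys_eq hne hconn' hrow' hcol'
    have hWm : ((S.image Prod.fst).card : ℤ) =
        ConvPoly.maxR (ConvPoly.cfgS S) - ConvPoly.minL (ConvPoly.cfgS S) + 1 := by
      rw [hxs, Int.card_Icc]
      have := ConvPoly.minL_le_maxR (ConvPoly.cfgS S) hok
      rw [Int.toNat_of_nonneg (by omega)]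
      omega
    have hHm : ((S.image Prod.snd).card : ℤ) =
        (ConvPoly.cfgS S).y1 - (ConvPoly.cfgS S).y0 + 1 := by
      rw [hys]
      have hcy : Finset.Icc (ConvPoly.y0S S) (ConvPoly.y1S S) =
          Finset.Icc (ConvPoly.cfgS S).y0 (ConvPoly.cfgS S).y1 := rfl
      rw [hcy, Int.card_Icc]
      have := hok.1
      rw [Int.toNat_of_nonneg (by omega)]
      omega
    have hpairs := ConvPoly.pairs_eq S
    have hU := ConvPoly.U_bound S
    have hR := ConvPoly.R_bound S
    have hfilter_eq : ((S ×ˢ S).filter (fun p => CellAdj p.1 p.2)) =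
        ((S ×ˢ S).filter (fun p : (ℤ × ℤ) × (ℤ × ℤ) => ConvPoly.CellAdj' p.1 p.2)) :=
      Finset.filter_congr (fun p _ => Iff.rfl)
    have hPer : polyPerimeter S =
        4 * S.card - ((S ×ˢ S).filter (fun p => CellAdj p.1 p.2)).card := rfl
    have hPge : 2 * (S.image Prod.fst).card + 2 * (S.image Prod.snd).card ≤
        polyPerimeter S := by
      rw [hPer, hfilter_eq, hpairs]
      omega
    have hWpos : 0 < (S.image Prod.fst).card := Finset.card_pos.2 (hne.image _)
    have hHpos : 0 < (S.image Prod.snd).card := Finset.card_pos.2 (hne.image _)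
    have hPpos : 0 < polyPerimeter S := by omega
    have hIneq : 2 * (S.card : ℤ) ≤ s * (polyPerimeter S : ℤ) := by
      have h1 : (S.card : ℤ) ≤ s * (((S.image Prod.fst).card : ℤ) +
          ((S.image Prod.snd).card : ℤ)) := by
        rw [hcardA, hWm, hHm]
        exact hbound
      have h2 : 2 * ((S.image Prod.fst).card : ℤ) + 2 * ((S.image Prod.snd).card : ℤ) ≤
          (polyPerimeter S : ℤ) := by exact_mod_cast hPge
      have h3 : (0 : ℤ) ≤ s := by omega
      calc 2 * (S.card : ℤ) ≤ 2 * (s * (((S.image Prod.fst).card : ℤ) +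
            ((S.image Prod.snd).card : ℤ))) := by omega
        _ = s * (2 * ((S.image Prod.fst).card : ℤ) + 2 * ((S.image Prod.snd).card : ℤ)) := by
            ring
        _ ≤ s * (polyPerimeter S : ℤ) := mul_le_mul_of_nonneg_left h2 h3
    have hs0 : ((s.toNat : ℤ)) = s := Int.toNat_of_nonneg (by omega)
    rw [div_le_iff₀ (by exact_mod_cast hPpos)]
    calc (2 * (S.card : ℚ)) = ((2 * S.card : ℤ) : ℚ) := by push_cast; ring
      _ ≤ ((s * (polyPerimeter S : ℤ) : ℤ) : ℚ) := by exact_mod_cast hIneq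
      _ = (s.toNat : ℚ) * (polyPerimeter S : ℚ) := by
          have hQ : ((s : ℤ) : ℚ) = ((s.toNat : ℕ) : ℚ) := by exact_mod_cast hs0.symm
          push_cast
          rw [hQ]
  · -- the square is inside S
    intro p hp
    obtain ⟨px, py⟩ := p
    rw [Finset.mem_product, Finset.mem_Ico, Finset.mem_Ico] at hp
    have hs0 : ((s.toNat : ℤ)) = s := Int.toNat_of_nonneg (by omega)
    rw [hs0] at hp
    have hsqy := hsq py (by omega) (by omega)
    have e1 : ConvPoly.lfS S py ≤ a := hsqy.1
    have e2 : a + s - 1 ≤ ConvPoly.rfS S py := hsqy.2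
    have e3 : ConvPoly.y0S S ≤ b := hb1
    have e4 : b + s - 1 ≤ ConvPoly.y1S S := hb2
    exact (ConvPoly.memS hne hconn' hrow').2 ⟨by omega, by omega, by omega, by omega⟩
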